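/- Let K ≥ 1, F ∈ ℝ, α : ℤ/Kℤ → ℝ, β⁽¹⁾,…,β⁽⁴⁾ : ℤ/Kℤ → ℝ, and let G : ℝ^K → ℝ^K be the modeled Lorenz 96 vector field G_k(X) = Q_k(X) − α_k X_k + F. Then there exist constants c₁ ≥ 0 and c₂ > 0, depending only on max_k |α_k|, F, and K, such that every continuously differentiable function u : [0,T] → ℝ^K satisfying u′(t) = G(u(t)) for all t ∈ [0,T] obeys |u(t)|² ≤ (|u(0)|² + c₁) e^{c₂ t} for all t ∈ [0,T]. -/

import Mathlib

open Finset

/-- The quadratic part of the modeled single-scale Lorenz 96 vector field,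
with cyclic indices in `ℤ/Kℤ`. -/
def lorenz96Q {K : ℕ} (β1 β2 β3 β4 : ZMod K → ℝ) (X : ZMod K → ℝ)
    (k : ZMod K) : ℝ :=
  -(X (k - 1) * (β1 k * X (k - 2) - β1 (k + 1) * X (k + 1)))
    - (β2 k * X (k - 1) * X k - β2 (k + 1) * X (k + 1) ^ 2)
    - (β3 k * X k * X (k + 1) - β3 (k - 1) * X (k - 1) ^ 2)
    - (β4 k * X (k - 1) * X (k + 1) - β4 (k + 1) * X (k + 1) * X (k + 2))

/-- The modeled single-scale Lorenz 96 vector field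
`G_k(X) = Q_k(X) − α_k X_k + F`. -/
def lorenz96G {K : ℕ} (F : ℝ) (α β1 β2 β3 β4 : ZMod K → ℝ)
    (X : ZMod K → ℝ) (k : ZMod K) : ℝ :=
  lorenz96Q β1 β2 β3 β4 X k - α k * X k + F

lemma lorenz96_shift_sum {K : ℕ} [NeZero K] (f : ZMod K → ℝ) :
    ∑ k : ZMod K, f (k + 1) = ∑ k : ZMod K, f k :=
  Equiv.sum_comp (Equiv.addRight (1 : ZMod K)) f

lemma lorenz96_shift_sum' {K : ℕ} [NeZero K] (f : ZMod K → ℝ) :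
    ∑ k : ZMod K, f (k - 1) = ∑ k : ZMod K, f k :=
  Equiv.sum_comp (Equiv.subRight (1 : ZMod K)) f

/-- Energy conservation of the quadratic part. -/
lemma lorenz96_energy {K : ℕ} [NeZero K] (β1 β2 β3 β4 X : ZMod K → ℝ) :
    ∑ k : ZMod K, X k * lorenz96Q β1 β2 β3 β4 X k = 0 := by
  set a : ZMod K → ℝ := fun k => β1 k * X (k - 2) * X (k - 1) * X k with ha
  set b : ZMod K → ℝ := fun k => β2 k * X (k - 1) * X k ^ 2 with hb
  set c : ZMod K → ℝ := fun k => β3 k * X k ^ 2 * X (k + 1) with hc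
  set d : ZMod K → ℝ := fun k => β4 k * X (k - 1) * X k * X (k + 1) with hd
  have key : ∀ k : ZMod K, X k * lorenz96Q β1 β2 β3 β4 X k =
      (a (k + 1) - a k) + (b (k + 1) - b k) + (c (k - 1) - c k)
        + (d (k + 1) - d k) := by
    intro k
    have e1 : k + 1 - 2 = k - 1 := by ring
    have e2 : k + 1 - 1 = k := by ring
    have e3 : k - 1 + 1 = k := by ring
    have e4 : k + 1 + 1 = k + 2 := by ring
    simp only [lorenz96Q, ha, hb, hc, hd, e1, e2, e3, e4]
    ring
  calc ∑ k : ZMod K, X k * lorenz96Q β1 β2 β3 β4 X k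
      = ∑ k : ZMod K, ((a (k + 1) - a k) + (b (k + 1) - b k)
          + (c (k - 1) - c k) + (d (k + 1) - d k)) :=
        Finset.sum_congr rfl fun k _ => key k
    _ = 0 := by
        simp only [Finset.sum_add_distrib, Finset.sum_sub_distrib,
          lorenz96_shift_sum, lorenz96_shift_sum']
        ring

/-- Moment bound for solutions of the modeled Lorenz 96 system: there are
constants `c₁ ≥ 0`, `c₂ > 0` (depending only on `max_k |α_k|`, `F` and `K`)
such that every solution `u` of `u′ = G(u)` on `[0,T]` satisfies
`|u(t)|² ≤ (|u(0)|² + c₁) e^{c₂ t}`. -/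
theorem lorenz96_model_solution_bound (K : ℕ) [NeZero K] (F : ℝ)
    (α : ZMod K → ℝ) :
    ∃ c₁ : ℝ, 0 ≤ c₁ ∧ ∃ c₂ : ℝ, 0 < c₂ ∧
      ∀ (β1 β2 β3 β4 : ZMod K → ℝ) (T : ℝ) (u : ℝ → ZMod K → ℝ),
        (∀ t ∈ Set.Icc (0 : ℝ) T,
          HasDerivAt u (fun k => lorenz96G F α β1 β2 β3 β4 (u t) k) t) →
        ∀ t ∈ Set.Icc (0 : ℝ) T,
          ∑ k : ZMod K, (u t k) ^ 2 ≤
            (∑ k : ZMod K, (u 0 k) ^ 2 + c₁) * Real.exp (c₂ * t) := by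
  classical
  set A : ℝ := ∑ k : ZMod K, |α k| with hAdef
  have hA : 0 ≤ A := Finset.sum_nonneg fun k _ => abs_nonneg _
  set c₁ : ℝ := (K : ℝ) * F ^ 2 with hc₁def
  set c₂ : ℝ := 2 * A + 1 with hc₂def
  have hc₁ : 0 ≤ c₁ := by positivity
  have hc₂ : 0 < c₂ := by positivity
  have hc₂1 : 1 ≤ c₂ := by simp only [hc₂def]; linarith
  refine ⟨c₁, hc₁, c₂, hc₂, ?_⟩
  intro β1 β2 β3 β4 T u hu t ht
  set V : ℝ → ℝ := fun s => ∑ k : ZMod K, u s k ^ 2 with hVdef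
  set D : ℝ → ℝ := fun s => ∑ k : ZMod K,
      (2 : ℝ) * u s k ^ 1 * lorenz96G F α β1 β2 β3 β4 (u s) k with hDdef
  have hVd : ∀ s ∈ Set.Icc (0 : ℝ) T, HasDerivAt V (D s) s := by
    intro s hs
    have hk : ∀ k : ZMod K, HasDerivAt (fun r => u r k)
        (lorenz96G F α β1 β2 β3 β4 (u s) k) s := hasDerivAt_pi.mp (hu s hs)
    exact HasDerivAt.fun_sum fun k _ => (hk k).pow 2
  have hDle : ∀ s, D s ≤ c₂ * (V s + c₁) := by
    intro s
    have h0 := lorenz96_energy β1 β2 β3 β4 (u s)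
    have hsum : D s = ∑ k : ZMod K,
        (-(2 * α k) * u s k ^ 2 + 2 * F * u s k) := by
      calc D s = 2 * ∑ k : ZMod K, u s k * lorenz96Q β1 β2 β3 β4 (u s) k
            + ∑ k : ZMod K, (-(2 * α k) * u s k ^ 2 + 2 * F * u s k) := by
            simp only [hDdef, Finset.mul_sum, ← Finset.sum_add_distrib]
            refine Finset.sum_congr rfl fun k _ => ?_
            simp only [lorenz96G]; ring
        _ = _ := by rw [h0]; ring
    have hterm : ∀ k : ZMod K,
        -(2 * α k) * u s k ^ 2 + 2 * F * u s k ≤ c₂ * u s k ^ 2 + F ^ 2 := by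
      intro k
      have hαk : |α k| ≤ A :=
        Finset.single_le_sum (f := fun k => |α k|)
          (fun k _ => abs_nonneg _) (Finset.mem_univ k)
      have h1 : -(α k) ≤ A := le_trans (neg_le_abs (α k)) hαk
      have h2 : (0:ℝ) ≤ (A + α k) * u s k ^ 2 :=
        mul_nonneg (by linarith) (sq_nonneg _)
      have h3 : 2 * F * u s k ≤ u s k ^ 2 + F ^ 2 := by
        nlinarith [sq_nonneg (u s k - F)]
      simp only [hc₂def]
      nlinarith [sq_nonneg (u s k)]
    calc D s = ∑ k : ZMod K, (-(2 * α k) * u s k ^ 2 + 2 * F * u s k) := hsum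
      _ ≤ ∑ k : ZMod K, (c₂ * u s k ^ 2 + F ^ 2) :=
          Finset.sum_le_sum fun k _ => hterm k
      _ = c₂ * V s + c₁ := by
          rw [Finset.sum_add_distrib, ← Finset.mul_sum, Finset.sum_const,
            Finset.card_univ, ZMod.card, nsmul_eq_mul, hc₁def]
      _ ≤ c₂ * (V s + c₁) := by nlinarith [hc₁, hc₂1]
  -- Gronwall via antitonicity of `(V + c₁) e^{-c₂ s}`
  set g : ℝ → ℝ := fun s => (V s + c₁) * Real.exp (-c₂ * s) with hgdef
  have hgd : ∀ s ∈ Set.Icc (0 : ℝ) T, HasDerivAt g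
      (D s * Real.exp (-c₂ * s)
        + (V s + c₁) * (Real.exp (-c₂ * s) * -c₂)) s := by
    intro s hs
    have h1 : HasDerivAt (fun r : ℝ => -c₂ * r) (-c₂) s := by
      simpa using (hasDerivAt_id s).const_mul (-c₂)
    exact ((hVd s hs).add_const c₁).mul h1.exp
  have hanti : AntitoneOn g (Set.Icc 0 T) := by
    refine antitoneOn_of_deriv_nonpos (convex_Icc 0 T)
      (fun x hx => (hgd x hx).continuousAt.continuousWithinAt) ?_ ?_
    · intro x hx
      rw [interior_Icc] at hx
      exact ((hgd x (Set.Ioo_subset_Icc_self hx)).differentiableAt).differentiableWithinAt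
    · intro x hx
      rw [interior_Icc] at hx
      have hx' : x ∈ Set.Icc (0 : ℝ) T := Set.Ioo_subset_Icc_self hx
      rw [(hgd x hx').deriv]
      have hDx := hDle x
      have hexp : 0 < Real.exp (-c₂ * x) := Real.exp_pos _
      nlinarith
  have h0mem : (0 : ℝ) ∈ Set.Icc (0 : ℝ) T :=
    ⟨le_refl _, le_trans ht.1 ht.2⟩
  have hgle : (V t + c₁) * Real.exp (-c₂ * t) ≤ V 0 + c₁ := by
    have h := hanti h0mem ht ht.1
    simpa [hgdef, Real.exp_zero] using h
  have hkey : V t + c₁ ≤ (V 0 + c₁) * Real.exp (c₂ * t) := by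
    have h := mul_le_mul_of_nonneg_right hgle (Real.exp_pos (c₂ * t)).le
    rwa [mul_assoc, ← Real.exp_add, neg_mul, neg_add_cancel, Real.exp_zero,
      mul_one] at h
  have : V t ≤ (V 0 + c₁) * Real.exp (c₂ * t) := by linarith
  simpa [hVdef] using this
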